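/- Let g ∈ ℝ^d, H a symmetric d×d matrix, M > 0, and let h* be a global minimizer of m(h) = gᵀh + (1/2)hᵀHh + (M/6)‖h‖³. Then m(h*) ≤ -(M/12)‖h*‖³. -/

import Mathlib

open scoped RealInnerProductSpace

lemma cubic_real_aux (a b C : ℝ) (hC : 0 ≤ C)
    (key : ∀ t : ℝ, a + (1 / 2) * b + C ≤ t * a + (1 / 2) * (t ^ 2 * b) + |t| ^ 3 * C) :
    a + (1 / 2) * b + C ≤ -(1 / 2) * C := by
  have ha : a ≤ 0 := by
    have h1 := key (-1)
    have : |(-1 : ℝ)| = 1 := by norm_num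
    rw [this] at h1
    nlinarith [h1]
  have step : ∀ ε : ℝ, 0 < ε → ε < 1 → a + b + 3 * C ≤ ε * (|b| / 2 + 3 * C) := by
    intro ε h0 h1
    have hk := key (1 - ε)
    have habs : |1 - ε| = 1 - ε := abs_of_pos (by linarith)
    rw [habs] at hk
    have hmul : ε * (a + b + 3 * C) ≤ ε * (ε * (|b| / 2 + 3 * C)) := by
      have p1 : 0 ≤ ε ^ 2 * (|b| - b) := mul_nonneg (sq_nonneg ε) (sub_nonneg.2 (le_abs_self b))
      have p2 : 0 ≤ ε ^ 3 * C := mul_nonneg (by positivity) hC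
      nlinarith [hk, p1, p2]
    exact le_of_mul_le_mul_left hmul h0
  have hF : a + b + 3 * C ≤ 0 := by
    by_contra hpos
    push_neg at hpos
    set F := a + b + 3 * C with hFdef
    set K := |b| / 2 + 3 * C with hKdef
    have hK : 0 ≤ K := by positivity
    have hε0 : (0:ℝ) < min (1/2) (F / (2 * (K + 1))) := by
      apply lt_min (by norm_num)
      positivity
    have hε1 : min (1/2) (F / (2 * (K + 1))) < 1 :=
      lt_of_le_of_lt (min_le_left _ _) (by norm_num)
    have h2 := step _ hε0 hε1
    have h3 : min (1/2) (F / (2 * (K + 1))) ≤ F / (2 * (K + 1)) := min_le_right _ _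
    have h4 : F ≤ (F / (2 * (K + 1))) * K := le_trans h2 (mul_le_mul_of_nonneg_right h3 hK)
    have h5 : (F / (2 * (K + 1))) * K < F := by
      rw [div_mul_eq_mul_div, div_lt_iff₀ (by positivity)]
      nlinarith
    linarith
  linarith

theorem cubic_model_descent (d : ℕ) (hd : 0 < d)
    (g : EuclideanSpace ℝ (Fin d))
    (H : EuclideanSpace ℝ (Fin d) →L[ℝ] EuclideanSpace ℝ (Fin d))
    (hH : IsSelfAdjoint H) (M : ℝ) (hM : 0 < M)
    (hstar : EuclideanSpace ℝ (Fin d))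
    (hmin : ∀ h : EuclideanSpace ℝ (Fin d),
      ⟪g, hstar⟫ + (1 / 2) * ⟪hstar, H hstar⟫ + (M / 6) * ‖hstar‖ ^ 3
        ≤ ⟪g, h⟫ + (1 / 2) * ⟪h, H h⟫ + (M / 6) * ‖h‖ ^ 3) :
    ⟪g, hstar⟫ + (1 / 2) * ⟪hstar, H hstar⟫ + (M / 6) * ‖hstar‖ ^ 3
      ≤ -(M / 12) * ‖hstar‖ ^ 3 := by
  have hC : 0 ≤ (M / 6) * ‖hstar‖ ^ 3 := by positivity
  have key : ∀ t : ℝ, ⟪g, hstar⟫ + (1 / 2) * ⟪hstar, H hstar⟫ + (M / 6) * ‖hstar‖ ^ 3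
      ≤ t * ⟪g, hstar⟫ + (1 / 2) * (t ^ 2 * ⟪hstar, H hstar⟫)
        + |t| ^ 3 * ((M / 6) * ‖hstar‖ ^ 3) := by
    intro t
    have h1 := hmin (t • hstar)
    simp only [real_inner_smul_right, map_smul, real_inner_smul_left, norm_smul,
      Real.norm_eq_abs] at h1
    have e : t * ⟪g, hstar⟫ + (1 / 2) * (t ^ 2 * ⟪hstar, H hstar⟫)
        + |t| ^ 3 * ((M / 6) * ‖hstar‖ ^ 3)
        = t * ⟪g, hstar⟫ + 1 / 2 * (t * (t * ⟪hstar, H hstar⟫))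
        + M / 6 * (|t| * ‖hstar‖) ^ 3 := by ring
    rw [e]
    exact h1
  have := cubic_real_aux ⟪g, hstar⟫ ⟪hstar, H hstar⟫ ((M / 6) * ‖hstar‖ ^ 3) hC key
  nlinarith [this]
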